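/- arXiv:1706.04984 — 3 statements merged into one kernel-verified Lean document; each statement's English description precedes it below -/
import Mathlib

section
/- If ρ is a positive semidefinite operator on a finite-dimensional Hilbert space with full support (Supp ρ = V), and P, Q, S are positive semidefinite operators on V such that the operators √S P ρ P √S and √S Q ρ Q √S have orthogonal supports (i.e. their product is zero, equivalently Tr[√S P ρ P S Q ρ Q √S] = 0), and P, Q are projections, then Q S P = 0 (equivalently ‖P S Q‖₂ = 0). -/
open Matrix ComplexOrder

namespace Matrix.PosSemidef

/-- The positive semidefinite square root of a positive semidefinite matrix
(the definition removed from Mathlib, restored verbatim). -/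
noncomputable def sqrt {n 𝕜 : Type*} [Fintype n] [RCLike 𝕜] [DecidableEq n]
    {A : Matrix n n 𝕜} (hA : A.PosSemidef) : Matrix n n 𝕜 :=
  hA.1.eigenvectorUnitary.1 * diagonal ((↑) ∘ (√·) ∘ hA.1.eigenvalues) *
  (star hA.1.eigenvectorUnitary : Matrix n n 𝕜)

end Matrix.PosSemidef

namespace Matrix.PosSemidef

lemma posSemidef_sqrt {n 𝕜 : Type*} [Fintype n] [RCLike 𝕜] [DecidableEq n]
    {A : Matrix n n 𝕜} (hA : A.PosSemidef) : PosSemidef hA.sqrt := by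
  have hd : (diagonal ((↑) ∘ (√·) ∘ hA.1.eigenvalues) : Matrix n n 𝕜).PosSemidef := by
    refine posSemidef_diagonal_iff.mpr fun i => ?_
    rw [Function.comp_apply, RCLike.nonneg_iff]
    constructor
    · simp only [Function.comp_apply, RCLike.ofReal_re]
      exact Real.sqrt_nonneg _
    · simp only [Function.comp_apply, RCLike.ofReal_im]
  have h := hd.mul_mul_conjTranspose_same (hA.1.eigenvectorUnitary.1)
  rw [← star_eq_conjTranspose] at h
  exact h

lemma sqrt_mul_self {n 𝕜 : Type*} [Fintype n] [RCLike 𝕜] [DecidableEq n]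
    {A : Matrix n n 𝕜} (hA : A.PosSemidef) : hA.sqrt * hA.sqrt = A := by
  have hC : (star hA.1.eigenvectorUnitary : Matrix n n 𝕜) * hA.1.eigenvectorUnitary.1 = 1 :=
    Unitary.star_mul_self_of_mem hA.1.eigenvectorUnitary.2
  have hs := hA.1.spectral_theorem
  rw [Unitary.conjStarAlgAut_apply] at hs
  conv_rhs => rw [hs]
  simp only [sqrt]
  calc _ = (hA.1.eigenvectorUnitary.1 * (diagonal ((↑) ∘ (√·) ∘ hA.1.eigenvalues) *
      ((star hA.1.eigenvectorUnitary : Matrix n n 𝕜) * hA.1.eigenvectorUnitary.1) *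
      diagonal ((↑) ∘ (√·) ∘ hA.1.eigenvalues))) * (star hA.1.eigenvectorUnitary : Matrix n n 𝕜) := by
        simp only [mul_assoc]
    _ = _ := by
      rw [hC, mul_one, diagonal_mul_diagonal]
      congr 3
      funext i
      simp only [Function.comp_apply]
      rw [← RCLike.ofReal_mul, Real.mul_self_sqrt (hA.eigenvalues_nonneg i)]
end Matrix.PosSemidef

/-- If ρ is positive definite (full support), P, Q are orthogonal
projections, S is positive semidefinite, and √S P ρ P √S and √S Q ρ Q √S have
orthogonal supports (their product is zero), then Q S P = 0. -/
theorem stmt0 {V : Type*} [Fintype V] [DecidableEq V]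
    (ρ P Q S : Matrix V V ℂ)
    (hρ : ρ.PosDef) (hS : S.PosSemidef)
    (hPh : P.IsHermitian) (hP2 : P * P = P)
    (hQh : Q.IsHermitian) (hQ2 : Q * Q = Q)
    (horth : (hS.sqrt * P * ρ * P * hS.sqrt) * (hS.sqrt * Q * ρ * Q * hS.sqrt) = 0) :
    Q * S * P = 0 := by
  set T := hS.sqrt with hT
  have hTh : Tᴴ = T := hS.posSemidef_sqrt.isHermitian
  have hTT : T * T = S := hS.sqrt_mul_self
  set R := hρ.posSemidef.sqrt with hR
  have hRh : Rᴴ = R := hρ.posSemidef.posSemidef_sqrt.isHermitian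
  have hRR : R * R = ρ := hρ.posSemidef.sqrt_mul_self
  set A := R * P * T with hA
  set B := R * Q * T with hB
  have hAc : Aᴴ = T * P * R := by
    simp [hA, conjTranspose_mul, hTh, hRh, hPh.eq, mul_assoc]
  have hBc : Bᴴ = T * Q * R := by
    simp [hB, conjTranspose_mul, hTh, hRh, hQh.eq, mul_assoc]
  have key : Aᴴ * A * (Bᴴ * B) = 0 := by
    rw [hAc, hBc, hA, hB]
    calc T * P * R * (R * P * T) * (T * Q * R * (R * Q * T))
        = (T * P * (R * R) * P * T) * (T * Q * (R * R) * Q * T) := by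
          simp only [mul_assoc]
      _ = 0 := by rw [hRR]; exact horth
  -- N := (A * Bᴴ)ᴴ * (A * Bᴴ) = B * Aᴴ * A * Bᴴ; N * N = 0
  have hN : (B * (Aᴴ * A) * Bᴴ) * (B * (Aᴴ * A) * Bᴴ) = 0 := by
    calc (B * (Aᴴ * A) * Bᴴ) * (B * (Aᴴ * A) * Bᴴ)
        = B * (Aᴴ * A * (Bᴴ * B)) * (Aᴴ * A) * Bᴴ := by
          simp only [mul_assoc]
      _ = 0 := by rw [key]; simp
  have hNherm : (B * (Aᴴ * A) * Bᴴ)ᴴ = B * (Aᴴ * A) * Bᴴ := by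
    simp [conjTranspose_mul, mul_assoc]
  have hNzero : B * (Aᴴ * A) * Bᴴ = 0 := by
    have := conjTranspose_mul_self_eq_zero (A := B * (Aᴴ * A) * Bᴴ)
    rw [hNherm] at this
    exact this.mp hN
  have hABh : A * Bᴴ = 0 := by
    have h1 : (A * Bᴴ)ᴴ * (A * Bᴴ) = 0 := by
      rw [conjTranspose_mul, conjTranspose_conjTranspose]
      calc B * Aᴴ * (A * Bᴴ) = B * (Aᴴ * A) * Bᴴ := by
            simp only [mul_assoc]
        _ = 0 := hNzero
    exact conjTranspose_mul_self_eq_zero.mp h1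
  -- A * Bᴴ = R * P * T * T * Q * R = R * (P * S * Q) * R
  have hRPSQR : R * (P * S * Q) * R = 0 := by
    calc R * (P * S * Q) * R = R * P * (T * T) * Q * R := by
          rw [hTT]; simp only [mul_assoc]
      _ = (R * P * T) * (T * Q * R) := by simp only [mul_assoc]
      _ = A * Bᴴ := by rw [hBc]
      _ = 0 := hABh
  have hRunit : IsUnit R := by
    have hdet : IsUnit R.det := by
      have : R.det * R.det = ρ.det := by rw [← det_mul, hRR]
      have hρdet : IsUnit ρ.det := hρ.det_pos.ne'.isUnit
      exact (isUnit_of_mul_isUnit_left (this ▸ hρdet))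
    exact (isUnit_iff_isUnit_det _).mpr hdet
  have hPSQ : P * S * Q = 0 := by
    have h2 : (P * S * Q) * R = 0 :=
      (hRunit.mul_right_eq_zero).mp (by rw [← mul_assoc]; exact hRPSQR)
    exact (hRunit.mul_left_eq_zero).mp h2
  calc Q * S * P = (P * S * Q)ᴴ := by
        simp [conjTranspose_mul, hPh.eq, hQh.eq, hS.isHermitian.eq, mul_assoc]
    _ = 0 := by rw [hPSQ]; simp
end

section
/- Let {M_j} and {N_k} be finite families of positive semidefinite operators on a finite-dimensional Hilbert space V such that M_j N_k = N_k M_j for all j, k. Then there exist finite-dimensional Hilbert spaces V₁, V₂, an isometry i : V → V₁ ⊗ V₂, and positive semidefinite operators M̄_j on V₁ and N̄_k on V₂ such that M_j = i* (M̄_j ⊗ I) i and N_k = i* (I ⊗ N̄_k) i for all j, k. -/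
open Matrix ComplexOrder Kronecker

namespace Tsi


variable {V : Type*} [Fintype V] [DecidableEq V]


noncomputable def matEuc (V : Type*) [Fintype V] [DecidableEq V] :
    Matrix V V ℂ ≃ₗ[ℂ] EuclideanSpace ℂ (V × V) where
  toFun A := WithLp.toLp 2 (fun p : V × V => A p.1 p.2)
  invFun x := Matrix.of fun i j => x (i, j)
  map_add' _ _ := rfl
  map_smul' _ _ := rfl
  left_inv _ := rfl
  right_inv _ := rfl

lemma matEuc_inner (x y : Matrix V V ℂ) :
    (inner ℂ (matEuc V x) (matEuc V y) : ℂ) = Matrix.trace (xᴴ * y) := by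
  simp only [PiLp.inner_apply, RCLike.inner_apply', Matrix.trace, Matrix.diag,
    Matrix.mul_apply, conjTranspose_apply, matEuc, LinearEquiv.coe_mk]
  rw [Fintype.sum_prod_type, Finset.sum_comm]
  rfl

lemma exists_onb (W : Submodule ℂ (Matrix V V ℂ)) :
    ∃ (n₁ : ℕ) (e : Fin n₁ → Matrix V V ℂ),
      (∀ α, e α ∈ W) ∧
      (∀ α β, Matrix.trace ((e α)ᴴ * e β) = if α = β then 1 else 0) ∧
      (∀ x ∈ W, ∑ α, Matrix.trace ((e α)ᴴ * x) • e α = x) := by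
  classical
  set L := matEuc V
  set W' : Submodule ℂ (EuclideanSpace ℂ (V × V)) := W.map (L : Matrix V V ℂ →ₗ[ℂ] EuclideanSpace ℂ (V × V)) with hW'
  haveI : FiniteDimensional ℂ W' := inferInstance
  set b := stdOrthonormalBasis ℂ W' with hb
  refine ⟨Module.finrank ℂ W', fun α => L.symm ((b α : EuclideanSpace ℂ (V × V))), ?_, ?_, ?_⟩
  · intro α
    obtain ⟨y, hy, hLy⟩ := Submodule.mem_map.mp (b α).2
    show L.symm ((b α : EuclideanSpace ℂ (V × V))) ∈ W
    rw [← hLy, LinearEquiv.coe_coe, L.symm_apply_apply]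
    exact hy
  · intro α β
    have h := matEuc_inner (L.symm ((b α : EuclideanSpace ℂ (V × V))))
      (L.symm ((b β : EuclideanSpace ℂ (V × V))))
    rw [L.apply_symm_apply, L.apply_symm_apply] at h
    rw [← h]
    exact orthonormal_iff_ite.mp b.orthonormal α β
  · intro x hx
    set ξ : W' := ⟨L x, Submodule.mem_map_of_mem hx⟩ with hξ
    have hrep := b.sum_repr ξ
    have hco : ∀ α, b.repr ξ α = Matrix.trace ((L.symm ((b α : EuclideanSpace ℂ (V × V))))ᴴ * x) := by
      intro α
      rw [b.repr_apply_apply]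
      have := matEuc_inner (L.symm ((b α : EuclideanSpace ℂ (V × V)))) x
      rw [L.apply_symm_apply] at this
      rw [← this]
      rfl
    have hcoe : ((∑ α, b.repr ξ α • b α : W') : EuclideanSpace ℂ (V × V)) = L x := by
      rw [hrep]
    push_cast at hcoe
    calc ∑ α, Matrix.trace ((L.symm ((b α : EuclideanSpace ℂ (V × V))))ᴴ * x) •
            L.symm ((b α : EuclideanSpace ℂ (V × V)))
        = ∑ α, L.symm (b.repr ξ α • (b α : EuclideanSpace ℂ (V × V))) := by
          refine Finset.sum_congr rfl fun α _ => ?_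
          rw [hco, LinearEquiv.map_smul]
      _ = L.symm (∑ α, b.repr ξ α • (b α : EuclideanSpace ℂ (V × V))) := by rw [map_sum]
      _ = x := by rw [hcoe, L.symm_apply_apply]



variable {n : Type*} [Fintype n] [DecidableEq n]

lemma commute_transfer {U X : Matrix n n ℂ} (hU : star U * U = 1) (hU' : U * star U = 1)
    (d g : n → ℂ) (hdg : ∀ i j, d i = d j → g i = g j)
    (h : X * (U * diagonal d * star U) = (U * diagonal d * star U) * X) :
    X * (U * diagonal g * star U) = (U * diagonal g * star U) * X := by
  set Y := star U * X * U with hY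
  have hXY : X = U * Y * star U := by
    rw [hY]
    calc X = (U * star U) * X * (U * star U) := by rw [hU', one_mul, mul_one]
    _ = U * (star U * X * U) * star U := by noncomm_ring
  have hYd : Y * diagonal d = diagonal d * Y := by
    have := congrArg (fun Z => star U * Z * U) h
    calc Y * diagonal d
        = (star U * X * U) * diagonal d * (star U * U) := by rw [hU, mul_one]
      _ = star U * (X * (U * diagonal d * star U)) * U := by noncomm_ring
      _ = star U * ((U * diagonal d * star U) * X) * U := by rw [h]
      _ = (star U * U) * diagonal d * (star U * X * U) := by noncomm_ring
      _ = diagonal d * Y := by rw [hU, one_mul]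
  have hYg : Y * diagonal g = diagonal g * Y := by
    ext i j
    rw [mul_diagonal, diagonal_mul]
    have hij : Y i j * d j = d i * Y i j := by
      have h2 : (Y * diagonal d) i j = (diagonal d * Y) i j := by rw [hYd]
      rwa [mul_diagonal, diagonal_mul] at h2
    rcases eq_or_ne (d i) (d j) with hd | hd
    · rw [hdg i j hd, mul_comm]
    · have hz : Y i j = 0 := by
        by_contra hzz
        apply hd
        have := hij
        rw [mul_comm (Y i j) (d j)] at this
        exact (mul_right_cancel₀ hzz this).symm
      simp [hz]
  have hcoll : ∀ A B : Matrix n n ℂ,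
      (U * A * star U) * (U * B * star U) = U * (A * B) * star U := by
    intro A B
    calc (U * A * star U) * (U * B * star U)
        = U * A * (star U * U) * B * star U := by noncomm_ring
      _ = U * (A * B) * star U := by rw [hU]; noncomm_ring
  calc X * (U * diagonal g * star U)
      = (U * Y * star U) * (U * diagonal g * star U) := by rw [← hXY]
    _ = U * (Y * diagonal g) * star U := hcoll _ _
    _ = U * (diagonal g * Y) * star U := by rw [hYg]
    _ = (U * diagonal g * star U) * (U * Y * star U) := (hcoll _ _).symm
    _ = (U * diagonal g * star U) * X := by rw [← hXY]


end Tsi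

open Tsi

/-- Tsirelson: commuting families of PSD operators on a
finite-dimensional space arise as pullbacks, via an isometry into a tensor
product, of operators acting on the two factors. -/
theorem stmt2 {V J K : Type*} [Fintype V] [DecidableEq V] [Fintype J] [Fintype K]
    (M : J → Matrix V V ℂ) (N : K → Matrix V V ℂ)
    (hM : ∀ j, (M j).PosSemidef) (hN : ∀ k, (N k).PosSemidef)
    (hcomm : ∀ j k, M j * N k = N k * M j) :
    ∃ (n₁ n₂ : ℕ) (i : Matrix (Fin n₁ × Fin n₂) V ℂ)
      (Mb : J → Matrix (Fin n₁) (Fin n₁) ℂ) (Nb : K → Matrix (Fin n₂) (Fin n₂) ℂ),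
      iᴴ * i = 1 ∧ (∀ j, (Mb j).PosSemidef) ∧ (∀ k, (Nb k).PosSemidef) ∧
      (∀ j, M j = iᴴ * (Mb j ⊗ₖ (1 : Matrix (Fin n₂) (Fin n₂) ℂ)) * i) ∧
      (∀ k, N k = iᴴ * ((1 : Matrix (Fin n₁) (Fin n₁) ℂ) ⊗ₖ Nb k) * i) := by
  classical
  set 𝒜 : StarSubalgebra ℂ (Matrix V V ℂ) := StarAlgebra.adjoin ℂ (Set.range M) with h𝒜
  set W : Submodule ℂ (Matrix V V ℂ) := Subalgebra.toSubmodule 𝒜.toSubalgebra with hWdef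
  have hMmem : ∀ j, M j ∈ W := fun j => StarAlgebra.subset_adjoin ℂ (Set.range M) ⟨j, rfl⟩
  have hWiff : ∀ x : Matrix V V ℂ, x ∈ W ↔ x ∈ 𝒜 := fun x => Iff.rfl
  have honeW : (1 : Matrix V V ℂ) ∈ W := (hWiff 1).mpr (one_mem 𝒜)
  have hmulW : ∀ {x y : Matrix V V ℂ}, x ∈ W → y ∈ W → x * y ∈ W := by
    intro x y hx hy
    exact (hWiff _).mpr (mul_mem ((hWiff _).mp hx) ((hWiff _).mp hy))
  have hstarW : ∀ {x : Matrix V V ℂ}, x ∈ W → xᴴ ∈ W := by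
    intro x hx
    have : star x ∈ 𝒜 := star_mem ((hWiff _).mp hx)
    rw [Matrix.star_eq_conjTranspose] at this
    exact (hWiff _).mpr this
  -- N k commutes with everything in W
  have hNW : ∀ k, ∀ x ∈ W, N k * x = x * N k := by
    intro k x hx
    rw [hWiff] at hx
    induction hx using StarAlgebra.adjoin_induction with
    | mem x hx => obtain ⟨j, rfl⟩ := hx; exact (hcomm j k).symm
    | algebraMap r => exact (Algebra.commutes r (N k)).symm
    | add x y hx hy ihx ihy => rw [mul_add, add_mul, ihx, ihy]
    | mul x y hx hy ihx ihy => rw [← mul_assoc, ihx, mul_assoc, ihy, mul_assoc]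
    | star x hx ih =>
        have h1 := congrArg star ih
        rw [StarMul.star_mul, StarMul.star_mul] at h1
        rw [show star (N k) = N k from (hN k).1] at h1
        exact h1.symm
  obtain ⟨n₁, e, heW, horth, hrep⟩ := exists_onb W
  set E1 : Matrix V V ℂ := ∑ α, (e α)ᴴ * e α with hE1def
  -- E1 commutes with everything in W
  have hE1W : ∀ x ∈ W, x * E1 = E1 * x := by
    intro x hx
    have hlhs : x * E1 = ∑ β, ∑ α, Matrix.trace ((e β)ᴴ * (e α * x)) • ((e α)ᴴ * e β) := by
      rw [hE1def, Finset.mul_sum]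
      refine Finset.sum_congr rfl fun β _ => ?_
      have h1 : e β * xᴴ = ∑ α, Matrix.trace ((e α)ᴴ * (e β * xᴴ)) • e α :=
        (hrep _ (hmulW (heW β) (hstarW hx))).symm
      have h2 := congrArg conjTranspose h1
      rw [conjTranspose_mul, conjTranspose_conjTranspose, conjTranspose_sum] at h2
      simp_rw [conjTranspose_smul] at h2
      have h3 : ∀ α, star (Matrix.trace ((e α)ᴴ * (e β * xᴴ))) =
          Matrix.trace ((e β)ᴴ * (e α * x)) := by
        intro α
        rw [← Matrix.trace_conjTranspose]
        have h4 : ((e α)ᴴ * (e β * xᴴ))ᴴ = x * (e β)ᴴ * e α := by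
          rw [conjTranspose_mul, conjTranspose_mul, conjTranspose_conjTranspose,
            conjTranspose_conjTranspose, Matrix.mul_assoc]
        rw [h4, Matrix.trace_mul_cycle, Matrix.trace_mul_cycle, Matrix.mul_assoc]
      simp_rw [h3] at h2
      calc x * ((e β)ᴴ * e β) = (x * (e β)ᴴ) * e β := by rw [Matrix.mul_assoc]
        _ = (∑ α, Matrix.trace ((e β)ᴴ * (e α * x)) • (e α)ᴴ) * e β := by rw [h2]
        _ = ∑ α, Matrix.trace ((e β)ᴴ * (e α * x)) • ((e α)ᴴ * e β) := by
            rw [Finset.sum_mul]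
            exact Finset.sum_congr rfl fun α _ => smul_mul_assoc _ _ _
    have hrhs : E1 * x = ∑ α, ∑ β, Matrix.trace ((e β)ᴴ * (e α * x)) • ((e α)ᴴ * e β) := by
      rw [hE1def, Finset.sum_mul]
      refine Finset.sum_congr rfl fun α _ => ?_
      calc (e α)ᴴ * e α * x = (e α)ᴴ * (e α * x) := by rw [Matrix.mul_assoc]
        _ = (e α)ᴴ * (∑ β, Matrix.trace ((e β)ᴴ * (e α * x)) • e β) := by
            rw [hrep _ (hmulW (heW α) hx)]
        _ = ∑ β, Matrix.trace ((e β)ᴴ * (e α * x)) • ((e α)ᴴ * e β) := by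
            rw [Finset.mul_sum]
            exact Finset.sum_congr rfl fun β _ => mul_smul_comm _ _ _
    rw [hlhs, hrhs, Finset.sum_comm]
  -- E1 commutes with each N k
  have hE1N : ∀ k, (N k) * E1 = E1 * (N k) := by
    intro k
    rw [hE1def, Finset.mul_sum, Finset.sum_mul]
    exact Finset.sum_congr rfl fun α _ =>
      hNW k _ (hmulW (hstarW (heW α)) (heW α))
  -- E1 is positive definite
  have hE1pd : E1.PosDef := by
    rw [Matrix.posDef_iff_dotProduct_mulVec]
    constructor
    · show E1ᴴ = E1
      rw [hE1def, conjTranspose_sum]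
      exact Finset.sum_congr rfl fun α _ => by
        rw [conjTranspose_mul, conjTranspose_conjTranspose]
    · intro x hx
      have hterm : ∀ A : Matrix V V ℂ, star x ⬝ᵥ ((Aᴴ * A) *ᵥ x) = star (A *ᵥ x) ⬝ᵥ (A *ᵥ x) := by
        intro A
        rw [star_mulVec, ← Matrix.dotProduct_mulVec, mulVec_mulVec]
      have hsmv : ∀ (F : Fin n₁ → Matrix V V ℂ) (y : V → ℂ),
          (∑ α, F α) *ᵥ y = ∑ α, (F α) *ᵥ y := by
        intro F y; ext v
        simp only [Matrix.mulVec, dotProduct, Matrix.sum_apply, Finset.sum_mul,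
          Finset.sum_apply]
        rw [Finset.sum_comm]
      have hdps : ∀ (y : V → ℂ) (F : Fin n₁ → V → ℂ), y ⬝ᵥ (∑ α, F α) = ∑ α, y ⬝ᵥ F α := by
        intro y F
        simp only [dotProduct, Finset.sum_apply, Finset.mul_sum]
        rw [Finset.sum_comm]
      have hsum : star x ⬝ᵥ (E1 *ᵥ x) = ∑ α, star (e α *ᵥ x) ⬝ᵥ (e α *ᵥ x) := by
        rw [hE1def, hsmv, hdps]
        exact Finset.sum_congr rfl fun α _ => hterm (e α)
      rw [hsum]
      have hex : ∃ α, e α *ᵥ x ≠ 0 := by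
        by_contra hcon
        push_neg at hcon
        apply hx
        have h1 : (1 : Matrix V V ℂ) = ∑ α, Matrix.trace ((e α)ᴴ * 1) • e α :=
          (hrep 1 honeW).symm
        have : x = (1 : Matrix V V ℂ) *ᵥ x := by rw [Matrix.one_mulVec]
        rw [this, h1, hsmv]
        refine Finset.sum_eq_zero fun α _ => ?_
        rw [Matrix.smul_mulVec, hcon α, smul_zero]
      obtain ⟨α0, hα0⟩ := hex
      refine Finset.sum_pos' (fun α _ => dotProduct_star_self_nonneg _) ⟨α0, Finset.mem_univ _, ?_⟩
      exact dotProduct_star_self_pos_iff.mpr hα0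
  -- construct R
  have hH : E1.IsHermitian := hE1pd.1
  set U : Matrix V V ℂ := (hH.eigenvectorUnitary : Matrix V V ℂ) with hUdef
  have hUU : star U * U = 1 := mem_unitaryGroup_iff'.mp hH.eigenvectorUnitary.2
  have hUU' : U * star U = 1 := mem_unitaryGroup_iff.mp hH.eigenvectorUnitary.2
  set g : V → ℂ := fun v => ((Real.sqrt (hH.eigenvalues v))⁻¹ : ℝ) with hgdef
  set R : Matrix V V ℂ := U * diagonal g * star U with hRdef
  have hspec : E1 = U * diagonal (RCLike.ofReal ∘ hH.eigenvalues) * star U :=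
    hH.spectral_theorem
  have hRH : Rᴴ = R := by
    have hsg : star g = g := funext fun v => Complex.conj_ofReal _
    rw [hRdef, Matrix.star_eq_conjTranspose U, conjTranspose_mul, conjTranspose_mul,
      conjTranspose_conjTranspose, diagonal_conjTranspose, hsg, ← Matrix.mul_assoc]
  have hRcomm : ∀ X : Matrix V V ℂ, X * E1 = E1 * X → X * R = R * X := by
    intro X hX
    refine commute_transfer hUU hUU' _ g (fun i j hij => ?_) (by rw [← hspec]; exact hX)
    have : hH.eigenvalues i = hH.eigenvalues j := by
      have : ((hH.eigenvalues i : ℝ) : ℂ) = ((hH.eigenvalues j : ℝ) : ℂ) := hij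
      exact_mod_cast this
    rw [hgdef]; simp [this]
  have hcoll : ∀ A B : Matrix V V ℂ,
      (U * A * star U) * (U * B * star U) = U * (A * B) * star U := by
    intro A B
    calc (U * A * star U) * (U * B * star U)
        = U * A * (star U * U) * B * star U := by noncomm_ring
      _ = U * (A * B) * star U := by rw [hUU]; noncomm_ring
  have hRE1R : R * E1 * R = 1 := by
    rw [hspec, hRdef, hcoll, hcoll, diagonal_mul_diagonal, diagonal_mul_diagonal]
    have hone : (fun i => g i * (RCLike.ofReal ∘ hH.eigenvalues) i * g i) = fun _ => (1 : ℂ) := by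
      funext v
      have hlam : 0 < hH.eigenvalues v := hE1pd.eigenvalues_pos v
      have hr : (Real.sqrt (hH.eigenvalues v))⁻¹ * (hH.eigenvalues v)
          * (Real.sqrt (hH.eigenvalues v))⁻¹ = 1 := by
        have hs : Real.sqrt (hH.eigenvalues v) ≠ 0 :=
          ne_of_gt (Real.sqrt_pos.mpr hlam)
        have h2 : Real.sqrt (hH.eigenvalues v) * Real.sqrt (hH.eigenvalues v)
            = hH.eigenvalues v := Real.mul_self_sqrt hlam.le
        rw [← h2]
        field_simp
        rw [Real.sqrt_sq (Real.sqrt_nonneg _)]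
      show g v * ((hH.eigenvalues v : ℝ) : ℂ) * g v = 1
      rw [hgdef]
      beta_reduce
      exact_mod_cast hr
    rw [hone, diagonal_one, Matrix.mul_one, hUU']
  have hRM : ∀ j, M j * R = R * M j := fun j => hRcomm _ (hE1W _ (hMmem j))
  have hRN : ∀ k, N k * R = R * N k := fun k => hRcomm _ (hE1N k)
  clear hRdef hRcomm hcoll
  clear_value R
  set n₂ := Fintype.card V with hn₂
  set ι : Fin n₂ ≃ V := (Fintype.equivFin V).symm with hι
  set i0 : Matrix (Fin n₁ × Fin n₂) V ℂ :=
    Matrix.of (fun p w => (e p.1 * R) (ι p.2) w) with hi0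
  have hexp : ∀ (X Y C : Matrix V V ℂ) (w w' : V),
      (Xᴴ * C * Y) w w' = ∑ s, ∑ t, star (X s w) * C s t * Y t w' := by
    intro X Y C w w'
    simp_rw [Matrix.mul_apply, conjTranspose_apply, Finset.sum_mul]
    rw [Finset.sum_comm]
  have hsand : ∀ (A : Matrix (Fin n₁) (Fin n₁) ℂ) (B : Matrix V V ℂ),
      i0ᴴ * (A ⊗ₖ B.submatrix ι ι) * i0
        = ∑ α, ∑ β, A α β • ((e α * R)ᴴ * B * (e β * R)) := by
    intro A B
    ext w w'
    calc (i0ᴴ * (A ⊗ₖ B.submatrix ι ι) * i0) w w'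
        = ∑ p, ∑ q, star (i0 p w) * ((A ⊗ₖ B.submatrix ι ι) p q) * i0 q w' := by
          simp_rw [Matrix.mul_apply, conjTranspose_apply, Finset.sum_mul]
          rw [Finset.sum_comm]
      _ = ∑ p : Fin n₁ × Fin n₂, ∑ q : Fin n₁ × Fin n₂,
            star ((e p.1 * R) (ι p.2) w) * (A p.1 q.1 * B (ι p.2) (ι q.2))
              * (e q.1 * R) (ι q.2) w' := by
          refine Finset.sum_congr rfl fun p _ => Finset.sum_congr rfl fun q _ => ?_
          rw [kroneckerMap_apply, submatrix_apply]
          rfl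
      _ = ∑ α, ∑ v : Fin n₂, ∑ β, ∑ u : Fin n₂,
            star ((e α * R) (ι v) w) * (A α β * B (ι v) (ι u)) * (e β * R) (ι u) w' := by
          rw [Fintype.sum_prod_type]
          refine Finset.sum_congr rfl fun α _ => Finset.sum_congr rfl fun v _ => ?_
          rw [Fintype.sum_prod_type]
      _ = ∑ α, ∑ β, ∑ v : Fin n₂, ∑ u : Fin n₂,
            star ((e α * R) (ι v) w) * (A α β * B (ι v) (ι u)) * (e β * R) (ι u) w' :=
          Finset.sum_congr rfl fun α _ => Finset.sum_comm
      _ = ∑ α, ∑ β, A α β * (((e α * R)ᴴ * B * (e β * R)) w w') := by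
          refine Finset.sum_congr rfl fun α _ => Finset.sum_congr rfl fun β _ => ?_
          rw [hexp]
          calc ∑ v : Fin n₂, ∑ u : Fin n₂,
                star ((e α * R) (ι v) w) * (A α β * B (ι v) (ι u)) * (e β * R) (ι u) w'
              = ∑ v : Fin n₂, ∑ t,
                  star ((e α * R) (ι v) w) * (A α β * B (ι v) t) * (e β * R) t w' :=
                Finset.sum_congr rfl fun v _ => Equiv.sum_comp ι
                  (fun t => star ((e α * R) (ι v) w) * (A α β * B (ι v) t) * (e β * R) t w')
            _ = ∑ s, ∑ t, star ((e α * R) s w) * (A α β * B s t) * (e β * R) t w' :=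
                Equiv.sum_comp ι
                  (fun s => ∑ t, star ((e α * R) s w) * (A α β * B s t) * (e β * R) t w')
            _ = A α β * ∑ s, ∑ t, star ((e α * R) s w) * B s t * (e β * R) t w' := by
                rw [Finset.mul_sum]
                refine Finset.sum_congr rfl fun s _ => ?_
                rw [Finset.mul_sum]
                refine Finset.sum_congr rfl fun t _ => ?_
                ring
      _ = (∑ α, ∑ β, A α β • ((e α * R)ᴴ * B * (e β * R))) w w' := by
          simp [Matrix.sum_apply, Matrix.smul_apply, smul_eq_mul]
  -- the isometry property
  have hii : i0ᴴ * i0 = 1 := by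
    have h1 : i0ᴴ * i0 = ∑ α, (e α * R)ᴴ * (e α * R) := by
      ext w w'
      calc (i0ᴴ * i0) w w'
          = ∑ p : Fin n₁ × Fin n₂, star (i0 p w) * i0 p w' := by
            simp_rw [Matrix.mul_apply, conjTranspose_apply]
        _ = ∑ α, ∑ v : Fin n₂, star ((e α * R) (ι v) w) * (e α * R) (ι v) w' := by
            rw [Fintype.sum_prod_type]
            rfl
        _ = ∑ α, ∑ s, star ((e α * R) s w) * (e α * R) s w' := by
            refine Finset.sum_congr rfl fun α _ => ?_
            exact Equiv.sum_comp ι (fun s => star ((e α * R) s w) * (e α * R) s w')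
        _ = (∑ α, (e α * R)ᴴ * (e α * R)) w w' := by
            simp [Matrix.sum_apply, Matrix.mul_apply, conjTranspose_apply, mul_comm]
    rw [h1]
    have h2 : ∀ α, (e α * R)ᴴ * (e α * R) = R * ((e α)ᴴ * e α) * R := by
      intro α
      rw [conjTranspose_mul, hRH]
      noncomm_ring
    simp_rw [h2]
    rw [← Finset.sum_mul, ← Finset.mul_sum, ← hE1def]
    exact hRE1R
  -- the key identity for M j
  have hkey : ∀ j, ∑ α, ∑ β, Matrix.trace (e α * M j * (e β)ᴴ) • ((e α)ᴴ * e β)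
      = M j * E1 := by
    intro j
    rw [Finset.sum_comm]
    have hinner : ∀ β, ∑ α, Matrix.trace (e α * M j * (e β)ᴴ) • (e α)ᴴ = M j * (e β)ᴴ := by
      intro β
      have h1 : e β * M j = ∑ α, Matrix.trace ((e α)ᴴ * (e β * M j)) • e α :=
        (hrep _ (hmulW (heW β) (hMmem j))).symm
      have h2 := congrArg conjTranspose h1
      rw [conjTranspose_mul, (hM j).1, conjTranspose_sum] at h2
      simp_rw [conjTranspose_smul] at h2
      have h3 : ∀ α, star (Matrix.trace ((e α)ᴴ * (e β * M j)))
          = Matrix.trace (e α * M j * (e β)ᴴ) := by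
        intro α
        rw [← Matrix.trace_conjTranspose]
        have h4 : ((e α)ᴴ * (e β * M j))ᴴ = M j * (e β)ᴴ * e α := by
          rw [conjTranspose_mul, conjTranspose_mul, conjTranspose_conjTranspose,
            (hM j).1, Matrix.mul_assoc]
        rw [h4, Matrix.trace_mul_cycle]
      simp_rw [h3] at h2
      exact h2.symm
    calc ∑ β, ∑ α, Matrix.trace (e α * M j * (e β)ᴴ) • ((e α)ᴴ * e β)
        = ∑ β, (∑ α, Matrix.trace (e α * M j * (e β)ᴴ) • (e α)ᴴ) * e β := by
          refine Finset.sum_congr rfl fun β _ => ?_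
          rw [Finset.sum_mul]
          exact Finset.sum_congr rfl fun α _ => (smul_mul_assoc _ _ _).symm
      _ = ∑ β, M j * ((e β)ᴴ * e β) := by
          refine Finset.sum_congr rfl fun β _ => ?_
          rw [hinner β, Matrix.mul_assoc]
      _ = M j * E1 := by rw [← Finset.mul_sum, ← hE1def]
  -- PSD of the Mb matrices
  have hMbPSD : ∀ j, (Matrix.of fun α β => Matrix.trace (e α * M j * (e β)ᴴ)
      : Matrix (Fin n₁) (Fin n₁) ℂ).PosSemidef := by
    intro j
    obtain ⟨sq, hsqH, hsq2⟩ : ∃ sq : Matrix V V ℂ, sqᴴ = sq ∧ sq * sq = M j :=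
      open MatrixOrder in
      ⟨CFC.sqrt (M j), (CFC.sqrt_nonneg (M j)).posSemidef.1, CFC.sqrt_mul_sqrt_self (M j) (hM j).nonneg⟩
    set D : Matrix (Fin n₁) (V × V) ℂ :=
      Matrix.of (fun α p => (e α * sq) p.1 p.2) with hD
    have hDD : (Matrix.of fun α β => Matrix.trace (e α * M j * (e β)ᴴ)
        : Matrix (Fin n₁) (Fin n₁) ℂ) = D * Dᴴ := by
      ext α β
      show Matrix.trace (e α * M j * (e β)ᴴ) = (D * Dᴴ) α β
      have h1 : e α * M j * (e β)ᴴ = (e α * sq) * (e β * sq)ᴴ := by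
        rw [conjTranspose_mul, hsqH, ← hsq2]
        noncomm_ring
      have hR2 : (D * Dᴴ) α β = ∑ iV, ∑ jV, (e α * sq) iV jV * star ((e β * sq) iV jV) := by
        rw [Matrix.mul_apply, Fintype.sum_prod_type]
        rfl
      rw [h1, hR2]
      simp [Matrix.trace, Matrix.diag, Matrix.mul_apply, conjTranspose_apply, mul_comm]
    rw [hDD]
    exact Matrix.posSemidef_self_mul_conjTranspose D
  refine ⟨n₁, n₂, i0,
    fun j => Matrix.of fun α β => Matrix.trace (e α * M j * (e β)ᴴ),
    fun k => (N k).submatrix ι ι,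
    hii, hMbPSD, fun k => (hN k).submatrix ι, ?_, ?_⟩
  · -- M j case
    intro j
    rw [show (1 : Matrix (Fin n₂) (Fin n₂) ℂ) = (1 : Matrix V V ℂ).submatrix ι ι from
      (submatrix_one_equiv ι).symm]
    rw [hsand _ 1]
    have hterm : ∀ α β : Fin n₁,
        (Matrix.of fun α β => Matrix.trace (e α * M j * (e β)ᴴ)) α β
          • ((e α * R)ᴴ * 1 * (e β * R))
        = R * (Matrix.trace (e α * M j * (e β)ᴴ) • ((e α)ᴴ * e β)) * R := by
      intro α β
      have h1 : (e α * R)ᴴ * 1 * (e β * R) = R * ((e α)ᴴ * e β) * R := by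
        rw [Matrix.mul_one, conjTranspose_mul, hRH]
        noncomm_ring
      rw [h1]
      show Matrix.trace (e α * M j * (e β)ᴴ) • (R * ((e α)ᴴ * e β) * R) = _
      rw [mul_smul_comm, smul_mul_assoc]
    calc M j = R * (M j * E1) * R := by
          rw [← Matrix.mul_assoc, ← hRM j]
          calc M j = M j * (R * E1 * R) := by rw [hRE1R, Matrix.mul_one]
            _ = M j * R * E1 * R := by noncomm_ring
      _ = R * (∑ α, ∑ β, Matrix.trace (e α * M j * (e β)ᴴ) • ((e α)ᴴ * e β)) * R := by
          rw [hkey j]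
      _ = ∑ α, ∑ β, (Matrix.of fun α β => Matrix.trace (e α * M j * (e β)ᴴ)) α β
            • ((e α * R)ᴴ * 1 * (e β * R)) := by
          simp_rw [hterm]
          rw [Finset.mul_sum, Finset.sum_mul]
          refine Finset.sum_congr rfl fun α _ => ?_
          rw [Finset.mul_sum, Finset.sum_mul]
  · -- N k case
    intro k
    rw [hsand 1 (N k)]
    have hdiag : ∀ α, ∑ β, (1 : Matrix (Fin n₁) (Fin n₁) ℂ) α β
        • ((e α * R)ᴴ * N k * (e β * R)) = (e α * R)ᴴ * N k * (e α * R) := by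
      intro α
      rw [Finset.sum_eq_single α]
      · simp [Matrix.one_apply]
      · intro b _ hb
        simp [Matrix.one_apply, Ne.symm hb]
      · intro h; exact absurd (Finset.mem_univ α) h
    have hterm : ∀ α, (e α * R)ᴴ * N k * (e α * R)
        = R * (((e α)ᴴ * e α) * N k) * R := by
      intro α
      have h1 : (e α * R)ᴴ * N k * (e α * R) = R * ((e α)ᴴ * (N k * e α)) * R := by
        rw [conjTranspose_mul, hRH]
        noncomm_ring
      rw [h1, hNW k (e α) (heW α)]
      noncomm_ring
    calc N k = R * (E1 * N k) * R := by
          rw [← Matrix.mul_assoc]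
          calc N k = (R * E1 * R) * N k := by rw [hRE1R, Matrix.one_mul]
            _ = R * E1 * (R * N k) := by noncomm_ring
            _ = R * E1 * (N k * R) := by rw [← hRN k]
            _ = R * E1 * N k * R := by noncomm_ring
      _ = ∑ α, ∑ β, (1 : Matrix (Fin n₁) (Fin n₁) ℂ) α β
            • ((e α * R)ᴴ * N k * (e β * R)) := by
          simp_rw [hdiag, hterm]
          rw [← Finset.sum_mul, ← Finset.mul_sum, ← Finset.sum_mul, ← hE1def]
end

section
/- Let q be a probability distribution on {1,…,n} × B with q(a,b) > 0 for all a,b, and let δ_{ab} ∈ [0,1] satisfy Σ_{ab} q(a,b) δ_{ab} = ε. Then Σ_{ab} q(a,b) Σ_{i=1}^{a−1} 3√(δ_{ib}) ≤ 3 √(Σ_{ab} q(b)²/q(a,b)) · √ε, where q(b) = Σ_a q(a,b). -/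
open BigOperators

/-- for a full-support distribution q on {1,…,n} × B and
δ_{ab} ∈ [0,1] with Σ_{ab} q(a,b) δ_{ab} = ε,
Σ_{ab} q(a,b) Σ_{i<a} 3√(δ_{ib}) ≤ 3 √(Σ_{ab} q(b)²/q(a,b)) √ε. -/
theorem stmt16 {n : ℕ} {B : Type*} [Fintype B]
    (q : Fin n → B → ℝ) (δab : Fin n → B → ℝ) (ε : ℝ)
    (hq : ∀ a b, 0 < q a b) (hqsum : ∑ a, ∑ b, q a b = 1)
    (hδ0 : ∀ a b, 0 ≤ δab a b) (hδ1 : ∀ a b, δab a b ≤ 1)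
    (hε : ∑ a, ∑ b, q a b * δab a b = ε) :
    ∑ a : Fin n, ∑ b : B,
        q a b * ∑ i ∈ Finset.univ.filter (fun i : Fin n => i < a), 3 * Real.sqrt (δab i b)
      ≤ 3 * Real.sqrt (∑ a : Fin n, ∑ b : B, (∑ a' : Fin n, q a' b) ^ 2 / q a b)
          * Real.sqrt ε := by
  set Q : B → ℝ := fun b => ∑ a' : Fin n, q a' b with hQ
  -- Step 1: rewrite the LHS swapping summation order
  have hswap : ∑ a : Fin n, ∑ b : B,
      q a b * ∑ i ∈ Finset.univ.filter (fun i : Fin n => i < a), 3 * Real.sqrt (δab i b)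
      = ∑ b : B, ∑ i : Fin n, (3 * Real.sqrt (δab i b)) *
          ∑ a ∈ Finset.univ.filter (fun a : Fin n => i < a), q a b := by
    rw [Finset.sum_comm]
    refine Finset.sum_congr rfl fun b _ => ?_
    have h1 : ∀ a : Fin n, q a b *
        ∑ i ∈ Finset.univ.filter (fun i : Fin n => i < a), 3 * Real.sqrt (δab i b)
        = ∑ i ∈ Finset.univ.filter (fun i : Fin n => i < a),
            q a b * (3 * Real.sqrt (δab i b)) := fun a => Finset.mul_sum _ _ _
    simp_rw [h1]
    rw [Finset.sum_comm' (t' := Finset.univ)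
      (s' := fun i => Finset.univ.filter (fun a : Fin n => i < a))
      (by intro x y; simp)]
    refine Finset.sum_congr rfl fun i _ => ?_
    rw [Finset.mul_sum]
    exact Finset.sum_congr rfl fun a _ => mul_comm _ _
  rw [hswap, Finset.sum_comm]
  -- Step 2: bound the tail sum by Q b
  have hstep2 : ∑ i : Fin n, ∑ b : B, (3 * Real.sqrt (δab i b)) *
        ∑ a ∈ Finset.univ.filter (fun a : Fin n => i < a), q a b
      ≤ ∑ i : Fin n, ∑ b : B, (3 * Real.sqrt (δab i b)) * Q b := by
    refine Finset.sum_le_sum fun i _ => Finset.sum_le_sum fun b _ => ?_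
    refine mul_le_mul_of_nonneg_left ?_ (by positivity)
    exact Finset.sum_le_sum_of_subset_of_nonneg (Finset.filter_subset _ _)
      (fun a _ _ => (hq a b).le)
  refine hstep2.trans ?_
  -- Step 3: Cauchy–Schwarz
  have hcs : ∑ i : Fin n, ∑ b : B, (3 * Real.sqrt (δab i b)) * Q b
      = 3 * ∑ p : Fin n × B, (Q p.2 / Real.sqrt (q p.1 p.2)) *
          (Real.sqrt (q p.1 p.2) * Real.sqrt (δab p.1 p.2)) := by
    rw [Finset.mul_sum, Fintype.sum_prod_type]
    refine Finset.sum_congr rfl fun i _ => Finset.sum_congr rfl fun b _ => ?_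
    have hs : Real.sqrt (q i b) ≠ 0 := ne_of_gt (Real.sqrt_pos.mpr (hq i b))
    field_simp
  rw [hcs]
  have hCS := Real.sum_mul_le_sqrt_mul_sqrt Finset.univ
      (fun p : Fin n × B => Q p.2 / Real.sqrt (q p.1 p.2))
      (fun p : Fin n × B => Real.sqrt (q p.1 p.2) * Real.sqrt (δab p.1 p.2))
  have hf2 : ∑ p : Fin n × B, (Q p.2 / Real.sqrt (q p.1 p.2)) ^ 2
      = ∑ a : Fin n, ∑ b : B, (∑ a' : Fin n, q a' b) ^ 2 / q a b := by
    rw [Fintype.sum_prod_type]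
    refine Finset.sum_congr rfl fun i _ => Finset.sum_congr rfl fun b _ => ?_
    rw [div_pow, Real.sq_sqrt (hq i b).le]
  have hg2 : ∑ p : Fin n × B, (Real.sqrt (q p.1 p.2) * Real.sqrt (δab p.1 p.2)) ^ 2 = ε := by
    rw [← hε, Fintype.sum_prod_type]
    refine Finset.sum_congr rfl fun i _ => Finset.sum_congr rfl fun b _ => ?_
    rw [mul_pow, Real.sq_sqrt (hq i b).le, Real.sq_sqrt (hδ0 i b)]
  rw [hf2, hg2] at hCS
  have h3 : (0:ℝ) ≤ 3 := by norm_num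
  calc 3 * ∑ p : Fin n × B, (Q p.2 / Real.sqrt (q p.1 p.2)) *
          (Real.sqrt (q p.1 p.2) * Real.sqrt (δab p.1 p.2))
      ≤ 3 * (Real.sqrt (∑ a : Fin n, ∑ b : B, (∑ a' : Fin n, q a' b) ^ 2 / q a b)
          * Real.sqrt ε) := by exact mul_le_mul_of_nonneg_left hCS h3
    _ = 3 * Real.sqrt (∑ a : Fin n, ∑ b : B, (∑ a' : Fin n, q a' b) ^ 2 / q a b)
          * Real.sqrt ε := by ring
end
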